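/- Let m be a nonnegative integer. Then (q;q)_m / (x;q)_{m+1} = Σ_{k=0}^{m} [m choose k]_q · (-1)^k q^{binom(k+1,2)} / (1 - x q^k), as an identity of rational functions in q and x. -/

import Mathlib

open Finset Polynomial

noncomputable def qP {K : Type*} [Field K] (a q : K) (n : ℕ) : K :=
  ∏ i ∈ Finset.range n, (1 - a * q ^ i)

noncomputable def qBin {K : Type*} [Field K] (q : K) (n k : ℕ) : K :=
  if k ≤ n then qP (q ^ (n - k + 1)) q k / qP q q k else 0

/-- The field of rational functions in two variables `q2`, `x2` over `ℚ`. -/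
noncomputable def q2 : RatFunc (RatFunc ℚ) := RatFunc.C RatFunc.X
noncomputable def x2 : RatFunc (RatFunc ℚ) := RatFunc.X

section general
variable {K : Type*} [Field K] (q : K)

lemma qP_succ (a : K) (n : ℕ) : qP a q (n+1) = qP a q n * (1 - a * q ^ n) :=
  Finset.prod_range_succ _ _

lemma qP_succ' (a : K) (n : ℕ) : qP a q (n+1) = (1 - a) * qP (a*q) q n := by
  rw [qP, Finset.prod_range_succ', pow_zero, mul_one, mul_comm, qP]
  congr 1
  apply Finset.prod_congr rfl
  intro i _
  ring

lemma qP_q_ne (hq : ∀ j : ℕ, q ^ (j+1) ≠ 1) (n : ℕ) : qP q q n ≠ 0 := by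
  apply Finset.prod_ne_zero_iff.mpr
  intro i _
  have : q * q ^ i = q ^ (i+1) := by ring
  rw [this]
  exact sub_ne_zero_of_ne fun h => hq i h.symm

lemma qP_x_ne (x : K) (hx : ∀ k : ℕ, x * q ^ k ≠ 1) (n : ℕ) : qP x q n ≠ 0 := by
  apply Finset.prod_ne_zero_iff.mpr
  intro i _
  exact sub_ne_zero_of_ne fun h => hx i h.symm

lemma qP_add (j k : ℕ) : qP q q (j + k) = qP q q j * qP (q ^ (j+1)) q k := by
  rw [qP, Finset.prod_range_add, qP, qP]
  congr 1
  apply Finset.prod_congr rfl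
  intro i _
  rw [← pow_add, ← pow_succ', show j+1+i = j+i+1 by omega]

lemma qBin_eq (hq : ∀ j : ℕ, q ^ (j+1) ≠ 1) {n k : ℕ} (h : k ≤ n) :
    qBin q n k = qP q q n / (qP q q k * qP q q (n-k)) := by
  obtain ⟨j, rfl⟩ := Nat.exists_eq_add_of_le h
  rw [qBin, if_pos h, Nat.add_sub_cancel_left, add_comm k j, qP_add]
  rw [mul_comm (qP q q k) (qP q q j), mul_div_mul_left _ _ (qP_q_ne q hq j)]

lemma qBin_self (hq : ∀ j : ℕ, q ^ (j+1) ≠ 1) (n : ℕ) : qBin q n n = 1 := by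
  rw [qBin, if_pos le_rfl, Nat.sub_self, zero_add, pow_one, div_self (qP_q_ne q hq n)]

lemma qBin_zero (n : ℕ) : qBin q n 0 = 1 := by
  simp [qBin, qP]

lemma qBin_of_gt {n k : ℕ} (h : n < k) : qBin q n k = 0 := by
  rw [qBin, if_neg (by omega)]
section general
variable {K : Type*} [Field K] (q : K)

lemma pascal (hq : ∀ j : ℕ, q ^ (j+1) ≠ 1) (m k : ℕ) (hk : 1 ≤ k) :
    qBin q (m+1) k = qBin q m k + q^(m+1-k) * qBin q m (k-1) := by
  obtain ⟨l, rfl⟩ : ∃ l, k = l + 1 := ⟨k - 1, by omega⟩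
  rw [Nat.add_sub_cancel]
  rcases lt_trichotomy l m with h | rfl | h
  · obtain ⟨j, rfl⟩ : ∃ j, m = l + 1 + j := ⟨m - l - 1, by omega⟩
    rw [qBin_eq q hq (show l+1 ≤ l+1+j+1 by omega),
        qBin_eq q hq (show l+1 ≤ l+1+j by omega),
        qBin_eq q hq (show l ≤ l+1+j by omega),
        show l+1+j+1-(l+1) = j+1 by omega, show l+1+j-(l+1) = j by omega,
        show l+1+j-l = j+1 by omega,
        show l+1+j+1 = (l+1+j)+1 by omega, qP_succ q q (l+1+j),
        show l+1+j = l+(j+1) by omega, qP_add, qP_succ q (q^(l+1)) j,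
        qP_succ q q l, qP_succ q q j]
    have h1 := qP_q_ne q hq l
    have h2 := qP_q_ne q hq j
    have h3 : qP (q^(l+1)) q j ≠ 0 := by
      apply Finset.prod_ne_zero_iff.mpr
      intro i _
      rw [← pow_add]
      exact sub_ne_zero_of_ne fun h => hq (l + i) (by rw [show l+i+1 = l+1+i by omega]; exact h.symm)
    have h4 : (1 : K) - q * q ^ l ≠ 0 := by
      rw [← pow_succ']
      exact sub_ne_zero_of_ne fun h => hq l h.symm
    have h5 : (1 : K) - q * q ^ j ≠ 0 := by
      rw [← pow_succ']
      exact sub_ne_zero_of_ne fun h => hq j h.symm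
    have h6 : (1 : K) - q^(l+1) * q ^ j ≠ 0 := by
      rw [← pow_add]
      exact sub_ne_zero_of_ne fun h => hq (l + j) (by rw [show l+j+1 = l+1+j by omega]; exact h.symm)
    have h5' : (1 : K) - q ^ j * q ≠ 0 := by rwa [mul_comm]
    field_simp
    ring
  · rw [qBin_self q hq, qBin_of_gt q (by omega), Nat.sub_self, pow_zero,
      qBin_self q hq]
    ring
  · rw [qBin_of_gt q (by omega), qBin_of_gt q (by omega), qBin_of_gt q (by omega)]
    ring

end general

section general2
variable {K : Type*} [Field K] (q : K)

lemma qmain (hq : ∀ j : ℕ, q ^ (j+1) ≠ 1) :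
    ∀ (m : ℕ) (x : K), (∀ k : ℕ, x * q ^ k ≠ 1) →
    qP q q m / qP x q (m+1) =
      ∑ k ∈ Finset.range (m+1),
        qBin q m k * (-1)^k * q^(k*(k+1)/2) / (1 - x*q^k) := by
  intro m
  induction m with
  | zero =>
    intro x hx
    simp [qP, qBin]
  | succ m IH =>
    intro x hx
    have hx' : ∀ k : ℕ, (x*q) * q ^ k ≠ 1 := by
      intro k; rw [mul_assoc, ← pow_succ']; exact hx (k+1)
    have IH1 := IH x hx
    have IH2 := IH (x*q) hx'
    have key : ∀ i ∈ Finset.range (m+1),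
        qBin q (m+1) (i+1) * (-1)^(i+1) * q^((i+1)*(i+1+1)/2) / (1 - x*q^(i+1)) =
        qBin q m (i+1) * (-1)^(i+1) * q^((i+1)*(i+1+1)/2) / (1 - x*q^(i+1))
          + (-(q^(m+1))) * (qBin q m i * (-1)^i * q^(i*(i+1)/2) / (1 - (x*q)*q^i)) := by
      intro i hi
      have hi' : i ≤ m := Nat.lt_succ_iff.mp (Finset.mem_range.mp hi)
      rw [pascal q hq m (i+1) (by omega), Nat.add_sub_cancel,
        show m+1-(i+1) = m-i by omega]
      have e3 : q^((i+1)*(i+1+1)/2) = q^(i*(i+1)/2) * q^(i+1) := by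
        rw [← pow_add]; congr 1
        have h2 : (i+1)*(i+1+1) = i*(i+1) + 2*(i+1) := by ring
        omega
      have e5 : x * q^(i+1) = (x*q) * q^i := by rw [pow_succ']; ring
      have e6 : q^(m-i) * q^(i+1) = q^(m+1) := by rw [← pow_add]; congr 1; omega
      rw [e3, e5, ← e6]
      ring
    rw [Finset.sum_range_succ' _ (m+1), Finset.sum_congr rfl key,
      Finset.sum_add_distrib, ← Finset.mul_sum, ← IH2]
    have recomb : (∑ i ∈ Finset.range (m+1),
          qBin q m (i+1) * (-1)^(i+1) * q^((i+1)*((i+1)+1)/2) / (1 - x*q^(i+1)))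
        + qBin q (m+1) 0 * (-1)^0 * q^(0*(0+1)/2) / (1 - x*q^0)
        = qP q q m / qP x q (m+1) := by
      rw [show qBin q (m+1) 0 = qBin q m 0 by rw [qBin_zero, qBin_zero],
        ← Finset.sum_range_succ'
          (fun k => qBin q m k * (-1)^k * q^(k*(k+1)/2) / (1 - x*q^k)) (m+1),
        Finset.sum_range_succ, qBin_of_gt q (Nat.lt_succ_self m)]
      simp only [zero_mul, zero_div, add_zero]
      exact IH1.symm
    conv_rhs => rw [add_right_comm]
    rw [recomb]
    have hA : qP (x*q) q m ≠ 0 := qP_x_ne q (x*q) hx' m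
    have hB : (1:K) - x ≠ 0 := by
      have := hx 0
      rw [pow_zero, mul_one] at this
      exact sub_ne_zero_of_ne fun h => this h.symm
    have hC : (1:K) - x*q^(m+1) ≠ 0 := sub_ne_zero_of_ne fun h => hx (m+1) h.symm
    have hD : (1:K) - (x*q)*q^m ≠ 0 := sub_ne_zero_of_ne fun h => hx' m h.symm
    rw [qP_succ q q m, show m+1+1 = (m+1)+1 from rfl, qP_succ q x (m+1),
      qP_succ' q x m, qP_succ q (x*q) m]
    have hD' : (1:K) - q*q^m*x ≠ 0 := by convert hD using 2; ring
    have hA' : qP (q*x) q m ≠ 0 := by rwa [mul_comm q]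
    field_simp
    ring

end general2

lemma hq2 : ∀ j : ℕ, q2 ^ (j+1) ≠ 1 := by
  intro j h
  rw [q2, ← map_pow, ← map_one (RatFunc.C (K := RatFunc ℚ))] at h
  have h2 := (RatFunc.C : RatFunc ℚ →+* RatFunc (RatFunc ℚ)).injective h
  rw [← RatFunc.algebraMap_X (K := ℚ), ← map_pow, ← map_one (algebraMap (ℚ[X]) (RatFunc ℚ))] at h2
  have h3 := RatFunc.algebraMap_injective ℚ h2
  have := congrArg Polynomial.natDegree h3
  simp [Polynomial.natDegree_X_pow] at this

lemma hx2 : ∀ k : ℕ, x2 * q2 ^ k ≠ 1 := by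
  intro k h
  rw [x2, q2, ← map_pow, ← RatFunc.algebraMap_C, ← RatFunc.algebraMap_X (K := RatFunc ℚ),
    ← map_mul, ← map_one (algebraMap ((RatFunc ℚ)[X]) (RatFunc (RatFunc ℚ)))] at h
  have h2 := RatFunc.algebraMap_injective (RatFunc ℚ) h
  rw [mul_comm] at h2
  have := congrArg Polynomial.natDegree h2
  rw [Polynomial.natDegree_C_mul_X _ (pow_ne_zero k RatFunc.X_ne_zero),
    Polynomial.natDegree_one] at this
  exact one_ne_zero this

theorem stmt_8 (m : ℕ) :
    qP q2 q2 m / qP x2 q2 (m + 1) =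
      ∑ k ∈ Finset.range (m + 1),
        qBin q2 m k * (-1) ^ k * q2 ^ (k * (k + 1) / 2) / (1 - x2 * q2 ^ k) := by
  exact qmain q2 hq2 m x2 hx2
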